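/- arXiv:1002.0853 — 3 statements merged into one kernel-verified Lean document; each statement's English description precedes it below -/
import Mathlib

section
/- Any finitely supported sequence c: ℤ^d → ℝ with ∑_{k∈ℤ^d} c_k = 0 can be written as a finite sum c = ∑_{i=1}^d ∇ᵢ b^{(i)} where each b^{(i)}: ℤ^d → ℝ is finitely supported and ∇ᵢ denotes the forward difference operator in the i-th coordinate: (∇ᵢ b)_k = b_k − b_{k−eᵢ}. -/
namespace ZSDaux

variable {d : ℕ}

/-- `P d c` : `c` is a sum of forward differences of finitely supported sequences. -/
def P (d : ℕ) (c : (Fin d → ℤ) → ℝ) : Prop :=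
  ∃ b : Fin d → ((Fin d → ℤ) → ℝ),
    (∀ i, (Function.support (b i)).Finite) ∧
    ∀ k : Fin d → ℤ, c k = ∑ i : Fin d, (b i k - b i (k - Pi.single i 1))

lemma P_zero : P d 0 := ⟨0, fun _ => by simp, fun k => by simp⟩

lemma P_congr {c₁ c₂ : (Fin d → ℤ) → ℝ} (h : P d c₁) (he : ∀ k, c₁ k = c₂ k) :
    P d c₂ := by
  obtain ⟨b, hb, e⟩ := h
  exact ⟨b, hb, fun k => (he k) ▸ e k⟩

lemma P_add {c₁ c₂ : (Fin d → ℤ) → ℝ} (h₁ : P d c₁) (h₂ : P d c₂) :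
    P d (c₁ + c₂) := by
  obtain ⟨b₁, hb₁, e₁⟩ := h₁
  obtain ⟨b₂, hb₂, e₂⟩ := h₂
  refine ⟨b₁ + b₂, fun i => (((hb₁ i).union (hb₂ i)).subset fun k hk => ?_), fun k => ?_⟩
  · by_contra hmem
    simp only [Set.mem_union, Function.mem_support, not_or, not_not] at hmem
    exact hk (by simp [hmem.1, hmem.2])
  · simp only [Pi.add_apply, e₁ k, e₂ k, ← Finset.sum_add_distrib]
    exact Finset.sum_congr rfl fun i _ => by ring

lemma P_neg {c : (Fin d → ℤ) → ℝ} (h : P d c) : P d (-c) := by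
  obtain ⟨b, hb, e⟩ := h
  refine ⟨-b, fun i => (hb i).subset ?_, fun k => ?_⟩
  · intro k hk; simpa [Function.mem_support] using hk
  · simp only [Pi.neg_apply, e k, ← Finset.sum_neg_distrib]
    exact Finset.sum_congr rfl fun i _ => by ring

lemma P_smul {c : (Fin d → ℤ) → ℝ} (r : ℝ) (h : P d c) : P d (r • c) := by
  obtain ⟨b, hb, e⟩ := h
  refine ⟨r • b, fun i => (hb i).subset ?_, fun k => ?_⟩
  · intro k hk
    simp only [Function.mem_support, Pi.smul_apply, smul_eq_mul] at hk ⊢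
    exact fun h0 => hk (by simp [h0])
  · simp only [Pi.smul_apply, smul_eq_mul, e k, Finset.mul_sum]
    exact Finset.sum_congr rfl fun i _ => by ring

lemma P_sum {ι : Type*} (s : Finset ι) (f : ι → (Fin d → ℤ) → ℝ)
    (hf : ∀ a ∈ s, P d (f a)) : P d (∑ a ∈ s, f a) := by
  classical
  induction s using Finset.induction_on with
  | empty => simpa using P_zero
  | insert _ _ hnotmem ih =>
    rw [Finset.sum_insert hnotmem]
    exact P_add (hf _ (Finset.mem_insert_self _ _))
      (ih fun a ha => hf a (Finset.mem_insert_of_mem ha))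

/-- the delta function at `a`. -/
def delta (a k : Fin d → ℤ) : ℝ := if k = a then 1 else 0

lemma delta_support (a : Fin d → ℤ) : (Function.support (delta a)).Finite := by
  apply (Set.finite_singleton a).subset
  intro k hk
  simp only [Function.mem_support, delta, ne_eq, ite_eq_right_iff, not_forall] at hk
  exact hk.1

lemma P_step1 (a : Fin d → ℤ) (i : Fin d) :
    P d (fun k => delta a k - delta (a + Pi.single i 1) k) := by
  classical
  refine ⟨Pi.single i (delta a), fun j => ?_, fun k => ?_⟩
  · rcases eq_or_ne j i with rfl | hj
    · simpa using delta_support a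
    · simp [Pi.single_eq_of_ne hj]
  · rw [Fintype.sum_eq_single i (fun j hj => by simp [Pi.single_eq_of_ne hj])]
    simp only [Pi.single_eq_same]
    congr 1
    simp [delta, sub_eq_iff_eq_add]

lemma P_stepn (a : Fin d → ℤ) (i : Fin d) (t : ℤ) :
    P d (fun k => delta a k - delta (a + Pi.single i t) k) := by
  induction t using Int.induction_on with
  | zero => exact P_congr P_zero (fun k => by simp)
  | succ n ih =>
    have h1 := P_step1 (a + Pi.single i (n : ℤ)) i
    have := P_add ih h1
    refine P_congr this (fun k => ?_)
    have : a + Pi.single i ((n : ℤ)) + Pi.single i 1 = a + Pi.single i ((n : ℤ) + 1) := by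
      rw [add_assoc, ← Pi.single_add]
    simp only [Pi.add_apply, this]
    ring
  | pred n ih =>
    have h1 := P_neg (P_step1 (a + Pi.single i (-(n : ℤ) - 1)) i)
    have e1 : a + Pi.single i (-(n : ℤ) - 1) + Pi.single i 1 = a + Pi.single i (-(n : ℤ)) := by
      rw [add_assoc, ← Pi.single_add]; norm_num
    rw [e1] at h1
    refine P_congr (P_add ih h1) (fun k => ?_)
    simp only [Pi.add_apply, Pi.neg_apply]
    ring

/-- truncation: keep the first `m` coordinates of `a`, zero out the rest. -/
def trunc (a : Fin d → ℤ) (m : ℕ) : Fin d → ℤ := fun j => if (j : ℕ) < m then a j else 0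

lemma trunc_zero (a : Fin d → ℤ) : trunc a 0 = 0 := by
  funext j; simp [trunc]

lemma trunc_ge (a : Fin d → ℤ) {m : ℕ} (hm : d ≤ m) : trunc a m = a := by
  funext j; simp [trunc, lt_of_lt_of_le j.isLt hm]

lemma trunc_succ (a : Fin d → ℤ) (m : ℕ) (hm : m < d) :
    trunc a (m + 1) = trunc a m + Pi.single (⟨m, hm⟩ : Fin d) (a ⟨m, hm⟩) := by
  funext j
  rcases lt_trichotomy (j : ℕ) m with h | h | h
  · have : j ≠ (⟨m, hm⟩ : Fin d) := by intro hj; simp [hj] at h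
    simp [trunc, Pi.single_eq_of_ne this, h, Nat.lt_succ_of_lt h]
  · have hj : j = (⟨m, hm⟩ : Fin d) := by ext; simpa using h
    subst hj
    simp [trunc]
  · have : j ≠ (⟨m, hm⟩ : Fin d) := by intro hj; simp [hj] at h
    have h1 : ¬ (j : ℕ) < m + 1 := by omega
    have h2 : ¬ (j : ℕ) < m := by omega
    simp [trunc, Pi.single_eq_of_ne this, h1, h2]

lemma P_trunc (a : Fin d → ℤ) (m : ℕ) :
    P d (fun k => delta (trunc a m) k - delta 0 k) := by
  induction m with
  | zero => exact P_congr P_zero (fun k => by simp [trunc_zero])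
  | succ m ih =>
    rcases lt_or_ge m d with hm | hm
    · have h1 := P_neg (P_stepn (trunc a m) (⟨m, hm⟩ : Fin d) (a ⟨m, hm⟩))
      refine P_congr (P_add ih h1) (fun k => ?_)
      simp only [Pi.add_apply, Pi.neg_apply, trunc_succ a m hm]
      ring
    · have : trunc a (m + 1) = trunc a m := by
        rw [trunc_ge a hm, trunc_ge a (by omega)]
      rw [this]; exact ih

lemma P_delta_sub (a : Fin d → ℤ) : P d (fun k => delta a k - delta 0 k) := by
  have := P_trunc a d
  rwa [trunc_ge a le_rfl] at this

end ZSDaux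

/-- Any finitely supported sequence c : ℤ^d → ℝ with total sum
zero is a finite sum c = ∑ᵢ ∇ᵢ b⁽ⁱ⁾ of forward differences of finitely
supported sequences b⁽ⁱ⁾, where (∇ᵢ b)_k = b_k − b_{k−eᵢ}. -/
theorem zero_sum_eq_sum_of_differences
    (d : ℕ) (hd : 0 < d) (c : (Fin d → ℤ) → ℝ)
    (hfin : (Function.support c).Finite)
    (hsum : HasSum c 0) :
    ∃ b : Fin d → ((Fin d → ℤ) → ℝ),
      (∀ i, (Function.support (b i)).Finite) ∧
      ∀ k : Fin d → ℤ,
        c k = ∑ i : Fin d, (b i k - b i (k - Pi.single i 1)) := by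
  classical
  set s := hfin.toFinset with hs
  have hsupp : ∀ a ∉ s, c a = 0 := by
    intro a ha
    by_contra h
    exact ha (hfin.mem_toFinset.mpr h)
  have hsum0 : ∑ a ∈ s, c a = 0 :=
    (hsum.unique (hasSum_sum_of_ne_finset_zero hsupp)).symm
  have hP : ZSDaux.P d (∑ a ∈ s, c a • (fun k => ZSDaux.delta a k - ZSDaux.delta 0 k)) :=
    ZSDaux.P_sum s _ (fun a _ => ZSDaux.P_smul (c a) (ZSDaux.P_delta_sub a))
  have hEq : ∀ k, (∑ a ∈ s, c a • (fun k => ZSDaux.delta a k - ZSDaux.delta 0 k)) k = c k := by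
    intro k
    simp only [Finset.sum_apply, Pi.smul_apply, smul_eq_mul, mul_sub]
    rw [Finset.sum_sub_distrib]
    have h2 : ∑ a ∈ s, c a * ZSDaux.delta 0 k = 0 := by
      rw [← Finset.sum_mul, hsum0, zero_mul]
    rw [h2, sub_zero]
    have : ∀ a ∈ s, c a * ZSDaux.delta a k = if a = k then c k else 0 := by
      intro a _
      simp only [ZSDaux.delta]
      rcases eq_or_ne a k with rfl | h
      · simp
      · simp [h, Ne.symm h]
    rw [Finset.sum_congr rfl this, Finset.sum_ite_eq' s k (fun _ => c k)]
    split_ifs with h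
    · rfl
    · exact (hsupp k h).symm
  obtain ⟨b, hb, e⟩ := hP
  exact ⟨b, hb, fun k => by rw [← hEq k, e k]⟩
end

section
/- More generally, if a finitely supported sequence c: ℤ^d → ℝ satisfies ∑_{k∈ℤ^d} c_k P(k) = 0 for every polynomial P of total degree at most N, then c is a finite linear combination of sequences of the form ∇^μ δ_{·−β} with |μ| = N+1 and β ∈ ℤ^d, where ∇^μ = ∇₁^{μ₁}⋯∇_d^{μ_d} is the mixed difference operator of multi-order μ. -/
/-- Forward difference in the i-th coordinate, as an endomorphism of
sequences ℤ^d → ℝ: (∇ᵢ f)(k) = f(k) − f(k − eᵢ). -/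
def forwardDiff (d : ℕ) (i : Fin d) : Function.End ((Fin d → ℤ) → ℝ) :=
  fun f k => f k - f (k - Pi.single i 1)

/-- Mixed difference operator ∇^μ = ∇₁^{μ₁} ⋯ ∇_d^{μ_d}. -/
def mixedDiff (d : ℕ) (μ : Fin d → ℕ) : Function.End ((Fin d → ℤ) → ℝ) :=
  (List.ofFn (fun i : Fin d => (forwardDiff d i) ^ (μ i))).prod

/-- The Kronecker delta sequence δ_{·−β}. -/
def kronDelta (d : ℕ) (β : Fin d → ℤ) : (Fin d → ℤ) → ℝ :=
  fun l => if l = β then 1 else 0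

open MvPolynomial Finset

noncomputable def seqOfL (d : ℕ) (v : Fin d → ℤ) :
    MvPolynomial (Fin d) ℝ →ₗ[ℝ] ((Fin d → ℤ) → ℝ) where
  toFun p := fun k => if ∀ i, v i ≤ k i then
    coeff (Finsupp.equivFunOnFinite.symm fun i => (k i - v i).toNat) p else 0
  map_add' p q := by
    funext k; by_cases h : ∀ i, v i ≤ k i <;> simp [h, coeff_add]
  map_smul' r p := by
    funext k; by_cases h : ∀ i, v i ≤ k i <;> simp [h]

lemma seqOf_monomial (d : ℕ) (v : Fin d → ℤ) (m : Fin d → ℕ) :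
    seqOfL d v (monomial (Finsupp.equivFunOnFinite.symm m) 1) =
      kronDelta d (fun i => v i + m i) := by
  funext k
  simp only [seqOfL, LinearMap.coe_mk, AddHom.coe_mk, kronDelta, coeff_monomial]
  by_cases h : ∀ i, v i ≤ k i
  · rw [if_pos h]
    have : (Finsupp.equivFunOnFinite.symm m = Finsupp.equivFunOnFinite.symm
        fun i => (k i - v i).toNat) ↔ (k = fun i => v i + m i) := by
      rw [Equiv.apply_eq_iff_eq]
      constructor
      · intro hm; funext i
        have := congrFun hm i
        have hvi := h i
        omega
      · intro hk; funext i
        have := congrFun hk i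
        have hvi := h i
        omega
    simp only [this]
  · simp only [h, if_false]
    push_neg at h
    obtain ⟨i, hi⟩ := h
    have : k ≠ fun i => v i + m i := by
      intro hk
      have := congrFun hk i
      omega
    simp [this]

section
variable (d : ℕ) (v : Fin d → ℤ)

def Good (A : Function.End ((Fin d → ℤ) → ℝ)) (P : MvPolynomial (Fin d) ℝ) : Prop :=
  ∀ q, seqOfL d v (P * q) = A (seqOfL d v q)

lemma good_one : Good d v 1 1 := by
  intro q; simp only [one_mul]; rfl

lemma good_mul {A B P Q} (hA : Good d v A P) (hB : Good d v B Q) :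
    Good d v (A * B) (P * Q) := by
  intro q
  have : P * Q * q = P * (Q * q) := by ring
  rw [this, hA, hB]; rfl

lemma good_pow {A P} (hA : Good d v A P) (n : ℕ) : Good d v (A ^ n) (P ^ n) := by
  induction n with
  | zero => simpa using good_one d v
  | succ n ih =>
    rw [pow_succ, pow_succ]
    exact good_mul d v ih hA

lemma good_forwardDiff (i : Fin d) : Good d v (forwardDiff d i) (1 - X i) := by
  intro q
  funext k
  have hexp : (1 - X i) * q = q - X i * q := by ring
  simp only [hexp, map_sub, Pi.sub_apply]
  show _ = seqOfL d v q k - seqOfL d v q (k - Pi.single i 1)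
  simp only [seqOfL, LinearMap.coe_mk, AddHom.coe_mk]
  by_cases h : ∀ j, v j ≤ k j
  · simp only [if_pos h]
    rw [coeff_X_mul']
    by_cases hi : v i < k i
    · have h' : ∀ j, v j ≤ (k - Pi.single i 1 : Fin d → ℤ) j := by
        intro j
        by_cases hj : j = i
        · subst hj; simp; omega
        · simp [Pi.single_apply, hj]; exact h j
      rw [if_pos h']
      have hmem : i ∈ (Finsupp.equivFunOnFinite.symm fun j => (k j - v j).toNat).support := by
        simp [Finsupp.mem_support_iff]
        omega
      rw [if_pos hmem]
      have heq : (Finsupp.equivFunOnFinite.symm fun j => (k j - v j).toNat) - Finsupp.single i 1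
          = (Finsupp.equivFunOnFinite.symm fun j => ((k - Pi.single i 1 : Fin d → ℤ) j - v j).toNat) := by
        ext j
        by_cases hj : j = i
        · subst hj
          simp [Finsupp.single_apply, Pi.single_apply]
          omega
        · simp [Finsupp.single_apply, Pi.single_apply, hj, Ne.symm hj]
      rw [heq]
    · have hki : k i = v i := le_antisymm (by omega) (h i)
      have h' : ¬ ∀ j, v j ≤ (k - Pi.single i 1 : Fin d → ℤ) j := by
        push_neg
        exact ⟨i, by simp; omega⟩
      rw [if_neg h']
      have hmem : i ∉ (Finsupp.equivFunOnFinite.symm fun j => (k j - v j).toNat).support := by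
        simp [Finsupp.mem_support_iff]
        omega
      rw [if_neg hmem]
  · have h' : ¬ ∀ j, v j ≤ (k - Pi.single i 1 : Fin d → ℤ) j := by
      push_neg at h ⊢
      obtain ⟨j, hj⟩ := h
      refine ⟨j, ?_⟩
      by_cases hji : j = i
      · subst hji; simp; omega
      · simp [Pi.single_apply, hji]; omega
    simp only [if_neg h, if_neg h']

lemma good_prod : ∀ (n : ℕ) (A : Fin n → Function.End ((Fin d → ℤ) → ℝ))
    (P : Fin n → MvPolynomial (Fin d) ℝ), (∀ i, Good d v (A i) (P i)) →
    Good d v (List.ofFn A).prod (∏ i, P i) := by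
  intro n
  induction n with
  | zero => intro A P h; simpa using good_one d v
  | succ n ih =>
    intro A P h
    rw [List.ofFn_succ, List.prod_cons, Fin.prod_univ_succ]
    exact good_mul d v (h 0) (ih _ _ (fun i => h i.succ))

lemma good_mixed (μ : Fin d → ℕ) :
    Good d v (mixedDiff d μ) (∏ i, (1 - X i) ^ (μ i)) := by
  exact good_prod d v d _ _ (fun i => good_pow d v (good_forwardDiff d v i) (μ i))


lemma seq_mem_span (N : ℕ) (μ : Fin d → ℕ) (hμ : ∑ i, μ i = N + 1)
    (q : MvPolynomial (Fin d) ℝ) :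
    seqOfL d v ((∏ i, (1 - X i) ^ (μ i)) * q) ∈ Submodule.span ℝ
      { g : (Fin d → ℤ) → ℝ | ∃ (μ : Fin d → ℕ) (β : Fin d → ℤ),
          (∑ i : Fin d, μ i) = N + 1 ∧ g = mixedDiff d μ (kronDelta d β) } := by
  have hrw : (∏ i, (1 - X i) ^ (μ i)) * q
      = ∑ α ∈ q.support, (∏ i, (1 - X i) ^ (μ i)) * monomial α (coeff α q) := by
    rw [← Finset.mul_sum, support_sum_monomial_coeff]
  rw [hrw, map_sum]
  refine Submodule.sum_mem _ fun α hα => ?_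
  have hmono : monomial α (coeff α q) = (coeff α q) • monomial α (1:ℝ) := by
    rw [smul_monomial, smul_eq_mul, mul_one]
  rw [hmono, mul_smul_comm, map_smul]
  refine Submodule.smul_mem _ _ (Submodule.subset_span ?_)
  refine ⟨μ, fun i => v i + α i, hμ, ?_⟩
  rw [show monomial α (1:ℝ) = monomial (Finsupp.equivFunOnFinite.symm ⇑α) 1 by
    rw [Finsupp.equivFunOnFinite_symm_coe]]
  rw [good_mixed d v μ _, seqOf_monomial]

lemma X_pow_expand (i : Fin d) (M m : ℕ) (hm : m ≤ M) :
    (X i : MvPolynomial (Fin d) ℝ) ^ m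
      = ∑ t ∈ Finset.range (M + 1), ((-1 : ℝ) ^ t * m.choose t) • (1 - X i) ^ t := by
  have h1 : (X i : MvPolynomial (Fin d) ℝ) = (-(1 - X i)) + 1 := by ring
  rw [h1, add_pow]
  rw [Finset.sum_subset (Finset.range_subset_range.2 (Nat.add_le_add_right hm 1))
    (fun t ht hts => by
      have : m.choose t = 0 := Nat.choose_eq_zero_of_lt (by
        simp only [Finset.mem_range, not_lt] at ht hts ⊢; omega)
      rw [this]
      push_cast
      ring)]
  apply Finset.sum_congr rfl
  intro t ht
  rw [smul_eq_C_mul, neg_pow]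
  simp only [C_mul, C_pow, map_neg, map_one, map_natCast]
  ring

lemma prod_range_cast (a t : ℕ) :
    ∏ j ∈ Finset.range t, ((a : ℝ) - j) = (t.factorial : ℝ) * a.choose t := by
  induction t with
  | zero => simp
  | succ t ih =>
    rw [Finset.prod_range_succ, ih]
    rcases lt_or_ge a t with h | h
    · rw [Nat.choose_eq_zero_of_lt h, Nat.choose_eq_zero_of_lt (by omega)]
      simp
    · have hcast : ((a : ℝ) - t) = ((a - t : ℕ) : ℝ) := by
        rw [Nat.cast_sub h]
      rw [hcast]
      norm_cast
      calc t.factorial * a.choose t * (a - t)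
          = t.factorial * (a.choose (t+1) * (t+1)) := by
            rw [Nat.choose_succ_right_eq]; ring
        _ = (t+1).factorial * a.choose (t+1) := by
            rw [Nat.factorial_succ]; ring

noncomputable def Ppoly (d : ℕ) (v : Fin d → ℤ) (t : Fin d → ℕ) : MvPolynomial (Fin d) ℝ :=
  ∏ i, (C ((-1 : ℝ) ^ (t i) / (t i).factorial) *
    ∏ j ∈ Finset.range (t i), (X i - C ((v i : ℝ) + j)))

lemma eval_Ppoly (t : Fin d → ℕ) (k : Fin d → ℤ) (hk : ∀ i, v i ≤ k i) :
    eval (fun i => (k i : ℝ)) (Ppoly d v t)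
      = ∏ i, ((-1 : ℝ) ^ (t i) * ((k i - v i).toNat.choose (t i))) := by
  rw [Ppoly, map_prod]
  apply Finset.prod_congr rfl
  intro i _
  rw [map_mul, map_prod]
  simp only [map_sub, eval_X, eval_C]
  have ha : (((k i - v i).toNat : ℕ) : ℝ) = (k i : ℝ) - (v i : ℝ) := by
    rw [← Int.cast_natCast, Int.toNat_of_nonneg (by have := hk i; omega)]
    push_cast
    ring
  have hco : ∀ j ∈ Finset.range (t i), (k i : ℝ) - ((v i : ℝ) + j)
      = (((k i - v i).toNat : ℕ) : ℝ) - j := by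
    intro j _; rw [ha]; ring
  rw [Finset.prod_congr rfl hco, prod_range_cast]
  have hfac : (((t i).factorial : ℕ) : ℝ) ≠ 0 := Nat.cast_ne_zero.mpr (Nat.factorial_ne_zero _)
  field_simp

lemma totalDegree_Ppoly (t : Fin d → ℕ) : (Ppoly d v t).totalDegree ≤ ∑ i, t i := by
  refine le_trans (totalDegree_finset_prod _ _) (Finset.sum_le_sum fun i _ => ?_)
  refine le_trans (totalDegree_mul _ _) ?_
  rw [totalDegree_C, zero_add]
  refine le_trans (totalDegree_finset_prod _ _) ?_
  have h1 : ∀ j ∈ Finset.range (t i), (X i - C ((v i : ℝ) + j)).totalDegree ≤ 1 := by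
    intro j _
    have hb : (X i : MvPolynomial (Fin d) ℝ) - C ((v i : ℝ) + j)
        = X i + C (-((v i : ℝ) + j)) := by rw [map_neg]; ring
    rw [hb]
    refine le_trans (totalDegree_add _ _) (max_le (le_of_eq (totalDegree_X i)) ?_)
    rw [totalDegree_C]; omega
  refine le_trans (Finset.sum_le_sum h1) ?_
  simp

lemma exists_le_sum (t : Fin d → ℕ) : ∀ (m : ℕ), m ≤ ∑ i, t i →
    ∃ μ : Fin d → ℕ, (∀ i, μ i ≤ t i) ∧ ∑ i, μ i = m := by
  intro m
  induction m with
  | zero => intro _; exact ⟨0, fun i => Nat.zero_le _, by simp⟩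
  | succ m ih =>
    intro h
    obtain ⟨μ, hle, hsum⟩ := ih (by omega)
    have hex : ∃ i, μ i < t i := by
      by_contra hc
      push_neg at hc
      have : ∑ i, t i ≤ ∑ i, μ i := Finset.sum_le_sum fun i _ => hc i
      omega
    obtain ⟨i, hi⟩ := hex
    refine ⟨μ + Pi.single i 1, fun j => ?_, ?_⟩
    · by_cases hj : j = i
      · subst hj; simp; omega
      · simp [Pi.single_apply, hj]; exact hle j
    · simp only [Pi.add_apply]
      rw [Finset.sum_add_distrib, hsum, Finset.sum_pi_single']
      simp

end

/-- A finitely supported sequence annihilating all polynomials of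
total degree ≤ N is a finite linear combination of mixed differences
∇^μ δ_{·−β} with |μ| = N + 1. -/
theorem annihilates_polynomials_in_span_of_differences
    (d N : ℕ) (hd : 0 < d) (c : (Fin d → ℤ) → ℝ)
    (hfin : (Function.support c).Finite)
    (hannih : ∀ P : MvPolynomial (Fin d) ℝ, P.totalDegree ≤ N →
      HasSum (fun k : Fin d → ℤ =>
        c k * MvPolynomial.eval (fun i => (k i : ℝ)) P) 0) :
    c ∈ Submodule.span ℝ
      { g : (Fin d → ℤ) → ℝ |
        ∃ (μ : Fin d → ℕ) (β : Fin d → ℤ),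
          (∑ i : Fin d, μ i) = N + 1 ∧
          g = mixedDiff d μ (kronDelta d β) } := by
  classical
  by_cases hc : c = 0
  · rw [hc]; exact Submodule.zero_mem _
  have hne : hfin.toFinset.Nonempty := by
    obtain ⟨k, hk⟩ := Function.ne_iff.mp hc
    exact ⟨k, hfin.mem_toFinset.mpr hk⟩
  set s := hfin.toFinset with hs
  set v : Fin d → ℤ := fun i => s.inf' hne (fun k => k i) with hv
  have hvle : ∀ k ∈ s, ∀ i, v i ≤ k i := fun k hk i => Finset.inf'_le _ hk
  set a : (Fin d → ℤ) → Fin d → ℕ := fun k i => (k i - v i).toNat with ha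
  set M : ℕ := s.sup (fun k => Finset.univ.sup (a k)) with hM
  have haM : ∀ k ∈ s, ∀ i, a k i ≤ M := fun k hk i =>
    le_trans (Finset.le_sup (Finset.mem_univ i)) (Finset.le_sup (f := fun k => Finset.univ.sup (a k)) hk)
  set F : MvPolynomial (Fin d) ℝ :=
    ∑ k ∈ s, monomial (Finsupp.equivFunOnFinite.symm (a k)) (c k) with hF
  set T := Fintype.piFinset (fun _ : Fin d => Finset.range (M + 1)) with hT
  set G : (Fin d → ℕ) → MvPolynomial (Fin d) ℝ :=
    fun t => ∏ i, (1 - X i) ^ (t i) with hG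
  -- seqOfL F = c
  have hsm : ∀ (e : Fin d →₀ ℕ) (r : ℝ),
      (monomial e r : MvPolynomial (Fin d) ℝ) = r • monomial e 1 := by
    intro e r
    rw [smul_monomial, smul_eq_mul, mul_one]
  have hFc : seqOfL d v F = c := by
    rw [hF, map_sum]
    have hsc : ∀ k ∈ s, seqOfL d v (monomial (Finsupp.equivFunOnFinite.symm (a k)) (c k))
        = c k • kronDelta d k := by
      intro k hk
      have hk2 : (fun i => v i + ((a k i : ℕ) : ℤ)) = k := by
        funext i
        have := hvle k hk i
        simp only [ha]
        omega
      rw [hsm, map_smul, seqOf_monomial, hk2]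
    rw [Finset.sum_congr rfl hsc]
    funext k0
    simp only [Finset.sum_apply, Pi.smul_apply, kronDelta, smul_eq_mul, mul_ite,
      mul_one, mul_zero]
    rw [Finset.sum_ite_eq]
    by_cases h0 : k0 ∈ s
    · rw [if_pos h0]
    · rw [if_neg h0]
      have : c k0 = 0 := by
        by_contra hne0
        exact h0 (hfin.mem_toFinset.mpr hne0)
      rw [this]
  -- monomial as product of X powers
  have hmonoX : ∀ (e : Fin d →₀ ℕ),
      (monomial e (1:ℝ) : MvPolynomial (Fin d) ℝ) = ∏ i, X i ^ (e i) := by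
    intro e
    rw [← prod_X_pow_eq_monomial]
    apply Finset.prod_subset (Finset.subset_univ _)
    intro x _ hx
    rw [Finsupp.notMem_support_iff.mp hx, pow_zero]
  -- expansion of each X-power product
  have hexp1 : ∀ k ∈ s, (∏ i, (X i : MvPolynomial (Fin d) ℝ) ^ (a k i))
      = ∑ t ∈ T, (∏ i, ((-1:ℝ) ^ (t i) * ((a k i).choose (t i)))) • G t := by
    intro k hk
    have hxe : ∀ i, (X i : MvPolynomial (Fin d) ℝ) ^ (a k i)
        = ∑ t ∈ Finset.range (M + 1), ((-1:ℝ) ^ t * ((a k i).choose t)) • (1 - X i) ^ t :=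
      fun i => X_pow_expand d i M (a k i) (haM k hk i)
    rw [Finset.prod_congr rfl (fun i _ => hxe i), Finset.prod_univ_sum]
    apply Finset.sum_congr rfl
    intro t ht
    simp only [smul_eq_C_mul, hG]
    rw [Finset.prod_mul_distrib, ← map_prod]
  -- regrouped expansion of F
  have hterm : ∀ k ∈ s, monomial (Finsupp.equivFunOnFinite.symm (a k)) (c k)
      = ∑ t ∈ T, (c k * ∏ i, ((-1:ℝ) ^ (t i) * ((a k i).choose (t i)))) • G t := by
    intro k hk
    rw [hsm, hmonoX]
    simp only [Finsupp.equivFunOnFinite_symm_apply_apply]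
    rw [hexp1 k hk, Finset.smul_sum]
    apply Finset.sum_congr rfl
    intro t _
    rw [smul_smul]
  have hFexp : F = ∑ t ∈ T,
      (∑ k ∈ s, c k * ∏ i, ((-1:ℝ) ^ (t i) * ((a k i).choose (t i)))) • G t := by
    rw [hF, Finset.sum_congr rfl hterm, Finset.sum_comm]
    apply Finset.sum_congr rfl
    intro t _
    rw [Finset.sum_smul]
  rw [← hFc, hFexp, map_sum]
  refine Submodule.sum_mem _ fun t ht => ?_
  rw [map_smul]
  by_cases hdeg : ∑ i, t i ≤ N
  · -- the coefficient vanishes by the moment conditions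
    have hP := hannih (Ppoly d v t) (le_trans (totalDegree_Ppoly d v t) hdeg)
    have h0 : ∀ k ∉ s, c k * eval (fun i => (k i : ℝ)) (Ppoly d v t) = 0 := by
      intro k hk
      have : c k = 0 := by
        by_contra h
        exact hk (hfin.mem_toFinset.mpr h)
      rw [this, zero_mul]
    have hsum2 : HasSum (fun k => c k * eval (fun i => (k i : ℝ)) (Ppoly d v t))
        (∑ k ∈ s, c k * eval (fun i => (k i : ℝ)) (Ppoly d v t)) :=
      hasSum_sum_of_ne_finset_zero h0
    have hzero : ∑ k ∈ s, c k * eval (fun i => (k i : ℝ)) (Ppoly d v t) = 0 :=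
      hsum2.unique hP
    have hb0 : ∑ k ∈ s, c k * ∏ i, ((-1:ℝ) ^ (t i) * ((a k i).choose (t i))) = 0 := by
      rw [← hzero]
      apply Finset.sum_congr rfl
      intro k hk
      rw [eval_Ppoly d v t k (hvle k hk)]
    rw [hb0, zero_smul]
    exact Submodule.zero_mem _
  · push_neg at hdeg
    obtain ⟨μ, hμle, hμsum⟩ := exists_le_sum d t (N + 1) (by omega)
    refine Submodule.smul_mem _ _ ?_
    have hsplit : G t = (∏ i, (1 - X i) ^ (μ i)) * ∏ i, (1 - X i) ^ (t i - μ i) := by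
      rw [hG, ← Finset.prod_mul_distrib]
      apply Finset.prod_congr rfl
      intro i _
      rw [← pow_add]
      congr 1
      have := hμle i
      omega
    rw [hsplit]
    exact seq_mem_span d v N μ hμsum _
end

section
/- For the hexagonal interpolatory scheme: given a bounded sequence v: ℤ² → ℝ, define the refined sequence w: ℤ² → ℝ by w_{Mk} = v_k, w_{Mk+ε₁} = ½v_k + ½v_{k+e₁}, w_{Mk+ε₂} equal either to ¼v_{k+e₁} + ½v_{k+e₂} + ¼v_k or to ½v_k + ¼v_{k+e₂} + ¼v_{k+e₁+e₂} (choice may depend on k), and w_{Mk+ε₃} equal either to ¼v_{k+e₂} + ¼v_{k+e₁+e₂} + ½v_{k+e₁} or to ¼v_k + ¼v_{k+e₁} + ½v_{k+e₁+e₂}, where M = [[2,1],[0,-2]] and ε₀=(0,0), ε₁=(1,0), ε₂=(1,-1), ε₃=(2,-1). Then sup over all adjacent pairs of refined values satisfies ‖Δ¹w‖_∞ ≤ (3/4)‖Δ¹v‖_∞, where ‖Δ¹u‖_∞ = max(sup_k|u_{k+e₁}−u_k|, sup_k|u_{k+e₂}−u_k|). -/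
set_option maxHeartbeats 1600000


/-- The hexagonal interpolatory scheme (with any choice of
stencil at each point for the cosets ε₂, ε₃) contracts first differences by
a factor 3/4 in the sup norm. -/
theorem hexagonal_scheme_contraction
    (v w : (Fin 2 → ℤ) → ℝ)
    (hbdd : ∃ C : ℝ, ∀ k, |v k| ≤ C)
    (M : Matrix (Fin 2) (Fin 2) ℤ) (hM : M = !![2, 1; 0, -2])
    (h0 : ∀ k : Fin 2 → ℤ, w (M.mulVec k) = v k)
    (h1 : ∀ k : Fin 2 → ℤ, w (M.mulVec k + ![1, 0]) =
      (1 / 2) * v k + (1 / 2) * v (k + ![1, 0]))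
    (h2 : ∀ k : Fin 2 → ℤ,
      w (M.mulVec k + ![1, -1]) =
          (1 / 4) * v (k + ![1, 0]) + (1 / 2) * v (k + ![0, 1]) + (1 / 4) * v k ∨
      w (M.mulVec k + ![1, -1]) =
          (1 / 2) * v k + (1 / 4) * v (k + ![0, 1]) + (1 / 4) * v (k + ![1, 1]))
    (h3 : ∀ k : Fin 2 → ℤ,
      w (M.mulVec k + ![2, -1]) =
          (1 / 4) * v (k + ![0, 1]) + (1 / 4) * v (k + ![1, 1]) + (1 / 2) * v (k + ![1, 0]) ∨
      w (M.mulVec k + ![2, -1]) =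
          (1 / 4) * v k + (1 / 4) * v (k + ![1, 0]) + (1 / 2) * v (k + ![1, 1])) :
    max (⨆ k : Fin 2 → ℤ, |w (k + ![1, 0]) - w k|)
        (⨆ k : Fin 2 → ℤ, |w (k + ![0, 1]) - w k|) ≤
    (3 / 4) * max (⨆ k : Fin 2 → ℤ, |v (k + ![1, 0]) - v k|)
                  (⨆ k : Fin 2 → ℤ, |v (k + ![0, 1]) - v k|) := by
  obtain ⟨C, hC⟩ := hbdd
  have hb1 : BddAbove (Set.range fun k : Fin 2 → ℤ => |v (k + ![1, 0]) - v k|) := by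
    refine ⟨2 * C, ?_⟩
    rintro x ⟨k, rfl⟩
    have := hC (k + ![1, 0]); have := hC k
    calc |v (k + ![1, 0]) - v k| ≤ |v (k + ![1, 0])| + |v k| := abs_sub _ _
      _ ≤ 2 * C := by linarith
  have hb2 : BddAbove (Set.range fun k : Fin 2 → ℤ => |v (k + ![0, 1]) - v k|) := by
    refine ⟨2 * C, ?_⟩
    rintro x ⟨k, rfl⟩
    have := hC (k + ![0, 1]); have := hC k
    calc |v (k + ![0, 1]) - v k| ≤ |v (k + ![0, 1])| + |v k| := abs_sub _ _
      _ ≤ 2 * C := by linarith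
  set D := max (⨆ k : Fin 2 → ℤ, |v (k + ![1, 0]) - v k|)
               (⨆ k : Fin 2 → ℤ, |v (k + ![0, 1]) - v k|) with hDdef
  have hD1 : ∀ k : Fin 2 → ℤ, |v (k + ![1, 0]) - v k| ≤ D :=
    fun k => le_trans (le_ciSup hb1 k) (le_max_left _ _)
  have hD2 : ∀ k : Fin 2 → ℤ, |v (k + ![0, 1]) - v k| ≤ D :=
    fun k => le_trans (le_ciSup hb2 k) (le_max_right _ _)
  have hD0 : (0:ℝ) ≤ D := le_trans (abs_nonneg _) (hD1 0)
  have keyH : ∀ a b a' : ℤ, a' = a + 1 → |v ![a', b] - v ![a, b]| ≤ D := by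
    intro a b a' h
    have hh := hD1 ![a, b]
    rwa [show (![a, b] : Fin 2 → ℤ) + ![1, 0] = ![a', b] by
      subst h; funext i; fin_cases i <;> simp] at hh
  have keyV : ∀ a b b' : ℤ, b' = b + 1 → |v ![a, b'] - v ![a, b]| ≤ D := by
    intro a b b' h
    have hh := hD2 ![a, b]
    rwa [show (![a, b] : Fin 2 → ℤ) + ![0, 1] = ![a, b'] by
      subst h; funext i; fin_cases i <;> simp] at hh
  have mv : ∀ p q : ℤ, M.mulVec ![p, q] = ![2*p + q, -(2*q)] := by
    intro p q; subst hM; funext i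
    fin_cases i <;> simp [Matrix.mulVec, dotProduct] <;> ring
  have eH : ∀ p q : ℤ, ((![p, q] : Fin 2 → ℤ) + ![1, 0]) = ![p+1, q] := by
    intro p q; funext i; fin_cases i <;> simp
  have eV : ∀ p q : ℤ, ((![p, q] : Fin 2 → ℤ) + ![0, 1]) = ![p, q+1] := by
    intro p q; funext i; fin_cases i <;> simp
  have eD : ∀ p q : ℤ, ((![p, q] : Fin 2 → ℤ) + ![1, 1]) = ![p+1, q+1] := by
    intro p q; funext i; fin_cases i <;> simp
  have W0 : ∀ p q : ℤ, w ![2*p + q, -(2*q)] = v ![p, q] := by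
    intro p q; rw [← mv, h0]
  have W1 : ∀ p q : ℤ, w ![2*p + q + 1, -(2*q)] =
      (1/2) * v ![p, q] + (1/2) * v ![p+1, q] := by
    intro p q
    have e1 : (![2*p + q + 1, -(2*q)] : Fin 2 → ℤ) = M.mulVec ![p, q] + ![1, 0] := by
      rw [mv]; funext i; fin_cases i <;> simp <;> ring
    rw [e1, h1, eH]
  have W2 : ∀ p q : ℤ,
      w ![2*p + q + 1, -(2*q) - 1] =
        (1/4) * v ![p+1, q] + (1/2) * v ![p, q+1] + (1/4) * v ![p, q] ∨
      w ![2*p + q + 1, -(2*q) - 1] =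
        (1/2) * v ![p, q] + (1/4) * v ![p, q+1] + (1/4) * v ![p+1, q+1] := by
    intro p q
    have e1 : (![2*p + q + 1, -(2*q) - 1] : Fin 2 → ℤ) = M.mulVec ![p, q] + ![1, -1] := by
      rw [mv]; funext i; fin_cases i <;> simp <;> ring
    rw [e1]
    rcases h2 ![p, q] with h | h
    · left; rw [h, eH, eV]
    · right; rw [h, eV, eD]
  have W3 : ∀ p q : ℤ,
      w ![2*p + q + 2, -(2*q) - 1] =
        (1/4) * v ![p, q+1] + (1/4) * v ![p+1, q+1] + (1/2) * v ![p+1, q] ∨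
      w ![2*p + q + 2, -(2*q) - 1] =
        (1/4) * v ![p, q] + (1/4) * v ![p+1, q] + (1/2) * v ![p+1, q+1] := by
    intro p q
    have e1 : (![2*p + q + 2, -(2*q) - 1] : Fin 2 → ℤ) = M.mulVec ![p, q] + ![2, -1] := by
      rw [mv]; funext i; fin_cases i <;> simp <;> ring
    rw [e1]
    rcases h3 ![p, q] with h | h
    · left; rw [h, eV, eD, eH]
    · right; rw [h, eH, eD]
  have coset : ∀ k : Fin 2 → ℤ, ∃ p q : ℤ,
      k = ![2*p + q, -(2*q)] ∨ k = ![2*p + q + 1, -(2*q)] ∨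
      k = ![2*p + q + 1, -(2*q) - 1] ∨ k = ![2*p + q + 2, -(2*q) - 1] := by
    intro k
    have hk : ∀ a b : ℤ, k 0 = a → k 1 = b → k = ![a, b] := by
      intro a b ha hb; funext i; fin_cases i
      · simpa using ha
      · simpa using hb
    rcases Int.even_or_odd (k 1) with ⟨m, hm⟩ | ⟨m, hm⟩
    · rcases Int.even_or_odd (k 0 + m) with ⟨n, hn⟩ | ⟨n, hn⟩
      · exact ⟨n, -m, Or.inl (hk _ _ (by omega) (by omega))⟩
      · exact ⟨n, -m, Or.inr (Or.inl (hk _ _ (by omega) (by omega)))⟩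
    · rcases Int.even_or_odd (k 0 + m) with ⟨n, hn⟩ | ⟨n, hn⟩
      · exact ⟨n, -(m+1), Or.inr (Or.inr (Or.inl (hk _ _ (by omega) (by omega))))⟩
      · exact ⟨n, -(m+1), Or.inr (Or.inr (Or.inr (hk _ _ (by omega) (by omega))))⟩
  have bd1 : ∀ k : Fin 2 → ℤ, |w (k + ![1, 0]) - w k| ≤ 3/4 * D := by
    intro k
    obtain ⟨p, q, hk | hk | hk | hk⟩ := coset k
    · subst hk
      rw [show (![2*p + q, -(2*q)] : Fin 2 → ℤ) + ![1, 0] = ![2*p + q + 1, -(2*q)] from by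
        funext i; fin_cases i <;> simp, W0, W1]
      have B := keyH p q (p+1) rfl
      rw [abs_le] at B; rw [abs_le]; constructor <;> linarith
    · subst hk
      rw [show (![2*p + q + 1, -(2*q)] : Fin 2 → ℤ) + ![1, 0] = ![2*(p+1) + q, -(2*q)] from by
        funext i; fin_cases i <;> simp <;> ring, W0, W1]
      have B := keyH p q (p+1) rfl
      rw [abs_le] at B; rw [abs_le]; constructor <;> linarith
    · subst hk
      rw [show (![2*p + q + 1, -(2*q) - 1] : Fin 2 → ℤ) + ![1, 0]
          = ![2*p + q + 2, -(2*q) - 1] from by funext i; fin_cases i <;> simp <;> ring]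
      have B1 := keyH p q (p+1) rfl
      have B2 := keyH p (q+1) (p+1) rfl
      have B3 := keyV p q (q+1) rfl
      have B4 := keyV (p+1) q (q+1) rfl
      rw [abs_le] at B1 B2 B3 B4
      rcases W3 p q with ha | ha <;> rcases W2 p q with hb | hb <;> rw [ha, hb] <;>
        rw [abs_le] <;> constructor <;> linarith
    · subst hk
      rw [show (![2*p + q + 2, -(2*q) - 1] : Fin 2 → ℤ) + ![1, 0]
          = ![2*(p+1) + q + 1, -(2*q) - 1] from by funext i; fin_cases i <;> simp <;> ring]
      have B1 := keyH p q (p+1) rfl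
      have B2 := keyH (p+1) q (p+1+1) rfl
      have B3 := keyH p (q+1) (p+1) rfl
      have B4 := keyH (p+1) (q+1) (p+1+1) rfl
      have B5 := keyV p q (q+1) rfl
      have B6 := keyV (p+1) q (q+1) rfl
      rw [abs_le] at B1 B2 B3 B4 B5 B6
      rcases W2 (p+1) q with ha | ha <;> rcases W3 p q with hb | hb <;> rw [ha, hb] <;>
        rw [abs_le] <;> constructor <;> linarith
  have bd2 : ∀ k : Fin 2 → ℤ, |w (k + ![0, 1]) - w k| ≤ 3/4 * D := by
    intro k
    obtain ⟨p, q, hk | hk | hk | hk⟩ := coset k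
    · subst hk
      rw [show (![2*p + q, -(2*q)] : Fin 2 → ℤ) + ![0, 1]
          = ![2*p + (q-1) + 1, -(2*(q-1)) - 1] from by
        funext i; fin_cases i <;> simp <;> ring, W0]
      have B1 := keyH p (q-1) (p+1) rfl
      have B2 := keyV p (q-1) q (by ring)
      have B3 := keyV (p+1) (q-1) q (by ring)
      have B4 := keyH p q (p+1) rfl
      rw [abs_le] at B1 B2 B3 B4
      rcases W2 p (q-1) with ha | ha <;>
        rw [ha, show q - 1 + 1 = q from by ring] <;>
        rw [abs_le] <;> constructor <;> linarith
    · subst hk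
      rw [show (![2*p + q + 1, -(2*q)] : Fin 2 → ℤ) + ![0, 1]
          = ![2*p + (q-1) + 2, -(2*(q-1)) - 1] from by
        funext i; fin_cases i <;> simp <;> ring, W1]
      have B1 := keyH p (q-1) (p+1) rfl
      have B2 := keyV p (q-1) q (by ring)
      have B3 := keyV (p+1) (q-1) q (by ring)
      have B4 := keyH p q (p+1) rfl
      rw [abs_le] at B1 B2 B3 B4
      rcases W3 p (q-1) with ha | ha <;>
        rw [ha, show q - 1 + 1 = q from by ring] <;>
        rw [abs_le] <;> constructor <;> linarith
    · subst hk
      rw [show (![2*p + q + 1, -(2*q) - 1] : Fin 2 → ℤ) + ![0, 1]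
          = ![2*p + q + 1, -(2*q)] from by funext i; fin_cases i <;> simp <;> ring, W1]
      have B1 := keyH p q (p+1) rfl
      have B2 := keyH p (q+1) (p+1) rfl
      have B3 := keyV p q (q+1) rfl
      have B4 := keyV (p+1) q (q+1) rfl
      rw [abs_le] at B1 B2 B3 B4
      rcases W2 p q with ha | ha <;> rw [ha] <;>
        rw [abs_le] <;> constructor <;> linarith
    · subst hk
      rw [show (![2*p + q + 2, -(2*q) - 1] : Fin 2 → ℤ) + ![0, 1]
          = ![2*(p+1) + q, -(2*q)] from by funext i; fin_cases i <;> simp <;> ring, W0]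
      have B1 := keyH p q (p+1) rfl
      have B2 := keyH p (q+1) (p+1) rfl
      have B3 := keyV p q (q+1) rfl
      have B4 := keyV (p+1) q (q+1) rfl
      rw [abs_le] at B1 B2 B3 B4
      rcases W3 p q with ha | ha <;> rw [ha] <;>
        rw [abs_le] <;> constructor <;> linarith
  exact max_le (ciSup_le bd1) (ciSup_le bd2)
end
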